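/- Let H be a real Hilbert space, F ⊂ H compact, and (f_n)_{n≥1} a greedy sequence for F with associated quantities σ_n and Kolmogorov widths d_n. Then for every I ∈ ℕ, σ_I ≤ (2^{I+1}/√3) · d_I. -/

import Mathlib

open Metric Set

/-- `σ_n := sup_{x ∈ F} dist(x, span{f 1, …, f n})`. -/
noncomputable def greedySigma {H : Type*} [NormedAddCommGroup H] [InnerProductSpace ℝ H]
    (F : Set H) (f : ℕ → H) (n : ℕ) : ℝ :=
  ⨆ x ∈ F, Metric.infDist x (Submodule.span ℝ (f '' Set.Icc 1 n) : Set H)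

/-- A greedy sequence for `F`: `f (n+1) ∈ F` maximizes the distance to the span of the
previously selected elements over `F`. -/
def IsGreedy {H : Type*} [NormedAddCommGroup H] [InnerProductSpace ℝ H]
    (F : Set H) (f : ℕ → H) : Prop :=
  ∀ n : ℕ, f (n + 1) ∈ F ∧ ∀ x ∈ F,
    Metric.infDist x (Submodule.span ℝ (f '' Set.Icc 1 n) : Set H) ≤
      Metric.infDist (f (n + 1)) (Submodule.span ℝ (f '' Set.Icc 1 n) : Set H)

/-- Kolmogorov `I`-width of `F`: the infimum over all subspaces `V` of dimension at most `I`
of `sup_{x ∈ F} dist(x, V)`. -/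
noncomputable def kolWidth {H : Type*} [NormedAddCommGroup H] [InnerProductSpace ℝ H]
    (F : Set H) (I : ℕ) : ℝ :=
  ⨅ V : {V : Submodule ℝ H // FiniteDimensional ℝ V ∧ Module.finrank ℝ V ≤ I},
    ⨆ x ∈ F, Metric.infDist x ((V : Submodule ℝ H) : Set H)

section Aux

open Finset
open scoped RealInnerProductSpace

variable {H : Type*} [NormedAddCommGroup H] [InnerProductSpace ℝ H]

omit [InnerProductSpace ℝ H] in
lemma le_biSup_of_mem {F : Set H} {g : H → ℝ} {R : ℝ} (hb : ∀ y ∈ F, g y ≤ R)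
    {x : H} (hx : x ∈ F) : g x ≤ ⨆ y ∈ F, g y := by
  have hB : BddAbove (Set.range fun y => ⨆ _ : y ∈ F, g y) := by
    refine ⟨max R 0, ?_⟩
    rintro _ ⟨y, rfl⟩
    by_cases hy : y ∈ F
    · simp only [ciSup_pos (f := fun _ : y ∈ F => g y) hy]
      exact le_max_of_le_left (hb y hy)
    · haveI : IsEmpty (y ∈ F) := isEmpty_Prop.mpr hy
      simp only [Real.iSup_of_isEmpty]
      exact le_max_right _ _
  calc g x = ⨆ _ : x ∈ F, g x := (ciSup_pos (f := fun _ : x ∈ F => g x) hx).symm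
    _ ≤ _ := le_ciSup hB x

lemma infDist_eq_norm_sub_proj (K : Submodule ℝ H) [K.HasOrthogonalProjection]
    (x : H) : Metric.infDist x (K : Set H) = ‖x - (K.orthogonalProjectionOnto x : H)‖ := by
  rw [Metric.infDist_eq_iInf, Submodule.coe_orthogonalProjectionOnto_apply,
    Submodule.starProjection_minimal]
  congr 1; ext y; rw [dist_eq_norm]

lemma exists_proj (K : Submodule ℝ H) (hK : FiniteDimensional ℝ K) (x : H) :
    ∃ p ∈ K, x - p ∈ Kᗮ ∧ ‖x - p‖ = Metric.infDist x (K : Set H) := by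
  haveI := hK
  exact ⟨K.orthogonalProjectionOnto x, (K.orthogonalProjectionOnto x).2,
    K.sub_starProjection_mem_orthogonal x, (infDist_eq_norm_sub_proj K x).symm⟩

set_option maxHeartbeats 1000000 in
lemma greedy_core (F : Set H) (f : ℕ → H) (hf : IsGreedy F f) (n : ℕ)
    (V : Submodule ℝ H) (hVfd : FiniteDimensional ℝ V) (hV : Module.finrank ℝ V ≤ n)
    {d : ℝ} (hd : ∀ x ∈ F, Metric.infDist x (V : Set H) ≤ d) :
    Metric.infDist (f (n + 1)) (Submodule.span ℝ (f '' Set.Icc 1 n) : Set H)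
      ≤ ((2 : ℝ) ^ (n + 1) / Real.sqrt 3) * d := by
  haveI := hVfd
  set K : ℕ → Submodule ℝ H := fun i => Submodule.span ℝ (f '' Set.Icc 1 i) with hK
  have instK : ∀ i, FiniteDimensional ℝ (K i) :=
    fun i => FiniteDimensional.span_of_finite ℝ ((Set.finite_Icc 1 i).image f)
  have hmemF : ∀ i, f (i + 1) ∈ F := fun i => (hf i).1
  set σ : ℕ → ℝ := fun i => Metric.infDist (f (i + 1)) (K i : Set H) with hσdef
  have hgreedy : ∀ i, ∀ x ∈ F, Metric.infDist x (K i : Set H) ≤ σ i := fun i => (hf i).2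
  have hσ0 : ∀ i, 0 ≤ σ i := fun i => Metric.infDist_nonneg
  have hKmono : ∀ {i j}, i ≤ j → K i ≤ K j := fun {i j} hij =>
    Submodule.span_mono (Set.image_mono (Set.Icc_subset_Icc_right hij))
  have hσanti : ∀ {i j}, i ≤ j → σ j ≤ σ i := by
    have hstep : ∀ i, σ (i + 1) ≤ σ i := by
      intro i
      calc σ (i + 1) ≤ Metric.infDist (f (i + 2)) (K i : Set H) :=
            Metric.infDist_le_infDist_of_subset (hKmono (Nat.le_succ i)) ⟨0, (K i).zero_mem⟩
        _ ≤ σ i := hgreedy i _ (hmemF (i + 1))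
    intro i j hij
    exact antitone_nat_of_succ_le hstep hij
  have hd0 : 0 ≤ d := le_trans Metric.infDist_nonneg (hd (f 1) (hmemF 0))
  have hRHS0 : 0 ≤ ((2 : ℝ) ^ (n + 1) / Real.sqrt 3) * d := by positivity
  rcases eq_or_lt_of_le (hσ0 n) with h0 | hpos
  · exact le_trans (le_of_eq h0.symm) hRHS0
  have hσpos : ∀ i, i ≤ n → 0 < σ i := fun i hi => lt_of_lt_of_le hpos (hσanti hi)
  -- residuals p i = projection of f (i+1) onto K i
  choose p hpK hporth hpnorm using fun i => exists_proj (K i) (instK i) (f (i + 1))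
  set g : ℕ → H := fun i => f (i + 1) - p i with hgdef
  set h : ℕ → H := fun i => (σ i)⁻¹ • g i with hhdef
  have hfmemK : ∀ {i j}, i < j → f (i + 1) ∈ K j := fun {i j} hij =>
    Submodule.subset_span ⟨i + 1, ⟨Nat.le_add_left 1 i, hij⟩, rfl⟩
  have hgK : ∀ {j i}, j < i → g j ∈ K i := fun {j i} hij =>
    Submodule.sub_mem _ (hfmemK hij) (hKmono (Nat.le_of_lt hij) (hpK j))
  have hhK : ∀ {j i}, j < i → h j ∈ K i := fun {j i} hij =>
    Submodule.smul_mem _ _ (hgK hij)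
  have hhorth : ∀ i, h i ∈ (K i)ᗮ := fun i => Submodule.smul_mem _ _ (hporth i)
  have hgnorm : ∀ i, ‖g i‖ = σ i := hpnorm
  have hhnorm : ∀ i, i ≤ n → ‖h i‖ = 1 := by
    intro i hi
    rw [hhdef]
    simp only [norm_smul, Real.norm_eq_abs, abs_inv, abs_of_nonneg (hσ0 i), hgnorm i]
    exact inv_mul_cancel₀ (hσpos i hi).ne'
  -- inner products with f (i+1)
  have hch : ∀ {i j}, i < j → ⟪f (i + 1), h j⟫ = 0 := fun {i j} hij =>
    (Submodule.mem_orthogonal _ _).1 (hhorth j) _ (hfmemK hij)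
  have hcd : ∀ i, i ≤ n → ⟪f (i + 1), h i⟫ = σ i := by
    intro i hi
    have h1 : f (i + 1) = g i + p i := by simp [hgdef]
    have h2' : ⟪p i, g i⟫ = 0 := (Submodule.mem_orthogonal _ _).1 (hporth i) _ (hpK i)
    rw [h1, hhdef]
    simp only [real_inner_smul_right, inner_add_left, h2', real_inner_self_eq_norm_sq, hgnorm i]
    rw [mul_zero, add_zero, sq, ← mul_assoc, inv_mul_cancel₀ (hσpos i hi).ne', one_mul]
  have hcl : ∀ i j, j ≤ n → |⟪f (i + 1), h j⟫| ≤ σ j := by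
    intro i j hj
    obtain ⟨q, hqK, -, hqnorm⟩ := exists_proj (K j) (instK j) (f (i + 1))
    have h2 : ⟪q, h j⟫ = (0 : ℝ) := (Submodule.mem_orthogonal _ _).1 (hhorth j) _ hqK
    have hsplit : ⟪f (i + 1), h j⟫ = ⟪f (i + 1) - q, h j⟫ := by
      rw [inner_sub_left, h2, sub_zero]
    rw [hsplit]
    calc |⟪f (i + 1) - q, h j⟫| ≤ ‖f (i + 1) - q‖ * ‖h j‖ := abs_real_inner_le_norm _ _
      _ = ‖f (i + 1) - q‖ := by rw [hhnorm j hj, mul_one]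
      _ ≤ σ j := hqnorm ▸ hgreedy j _ (hmemF i)
  -- orthonormality
  have hinner_hh : ∀ i j, i ≤ n → j ≤ n → ⟪h i, h j⟫ = if i = j then (1 : ℝ) else 0 := by
    intro i j hi hj
    rcases lt_trichotomy i j with hij | rfl | hij
    · rw [if_neg hij.ne]
      exact (Submodule.mem_orthogonal _ _).1 (hhorth j) _ (hhK hij)
    · rw [if_pos rfl, real_inner_self_eq_norm_sq, hhnorm i hi]; norm_num
    · rw [if_neg hij.ne', real_inner_comm]
      exact (Submodule.mem_orthogonal _ _).1 (hhorth i) _ (hhK hij)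
  have hO : Orthonormal ℝ (fun j : Fin (n + 1) => h j) := by
    rw [orthonormal_iff_ite]
    intro i j
    have hvals := hinner_hh i j (Nat.lt_succ_iff.mp i.2) (Nat.lt_succ_iff.mp j.2)
    try simp only [RCLike.inner_apply] at *
    rw [hvals]
    by_cases hij : i = j
    · simp [hij]
    · rw [if_neg (fun hval => hij (Fin.ext hval)), if_neg hij]
  -- a unit vector in the span of the h's orthogonal to V
  haveI hVproj : V.HasOrthogonalProjection := inferInstance
  set S : EuclideanSpace ℝ (Fin (n + 1)) →ₗ[ℝ] H :=
    { toFun := fun a => ∑ j : Fin (n + 1), a j • h j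
      map_add' := by intro a b; simp [add_smul, Finset.sum_add_distrib]
      map_smul' := by intro c a; simp [smul_smul, Finset.smul_sum] } with hS
  set T : EuclideanSpace ℝ (Fin (n + 1)) →ₗ[ℝ] V :=
    V.orthogonalProjectionOnto.toLinearMap.comp S with hT
  have hTnotinj : ¬ Function.Injective T := by
    intro hinj
    have h1 := LinearMap.finrank_le_finrank_of_injective hinj
    rw [finrank_euclideanSpace_fin] at h1
    omega
  obtain ⟨x, y, hxy, hne⟩ := Function.not_injective_iff.mp hTnotinj
  have hTa : T (x - y) = 0 := by rw [map_sub, hxy, sub_self]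
  have ha0 : x - y ≠ 0 := sub_ne_zero.mpr hne
  set b : EuclideanSpace ℝ (Fin (n + 1)) := ‖x - y‖⁻¹ • (x - y) with hb
  have hTb : T b = 0 := by rw [hb, map_smul, hTa, smul_zero]
  have hbnorm : ‖b‖ = 1 := by
    rw [hb, norm_smul, norm_inv, norm_norm, inv_mul_cancel₀ (norm_ne_zero_iff.mpr ha0)]
  set w : H := ∑ j : Fin (n + 1), b j • h j with hw
  have hwV : w ∈ Vᗮ := by
    have hproj : V.orthogonalProjectionOnto w = 0 := hTb
    exact V.orthogonalProjectionOnto_eq_zero_iff.mp hproj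
  have hbsq : ∑ j : Fin (n + 1), (b j) ^ 2 = 1 := by
    have h2 : Real.sqrt (∑ j : Fin (n + 1), ‖b j‖ ^ 2) = 1 := by
      rw [← EuclideanSpace.norm_eq b, hbnorm]
    have h3 : (∑ j : Fin (n + 1), ‖b j‖ ^ 2) = 1 := by
      have h4 := congrArg (fun s : ℝ => s ^ 2) h2
      simpa [Real.sq_sqrt (Finset.sum_nonneg fun _ _ => sq_nonneg _)] using h4
    simpa [Real.norm_eq_abs, sq_abs] using h3
  have hwnorm : ‖w‖ = 1 := by
    have h1 : ⟪w, w⟫ = ∑ j : Fin (n + 1), b j * b j := by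
      rw [hw]; simpa using hO.inner_sum b b Finset.univ
    have h2 : ‖w‖ ^ 2 = 1 := by
      rw [← real_inner_self_eq_norm_sq, h1]; simpa [sq] using hbsq
    rw [← Real.sqrt_sq (norm_nonneg w), h2, Real.sqrt_one]
  set β : ℕ → ℝ := fun j => if hj : j < n + 1 then b ⟨j, hj⟩ else 0 with hβ
  have hβval : ∀ j : Fin (n + 1), β (j : ℕ) = b j := by
    intro j; simp [hβ, j.2]; intro hj'; have := j.2; omega
  -- inner products with w
  have hfw : ∀ i, |⟪f (i + 1), w⟫| ≤ d := by
    intro i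
    obtain ⟨q, hqK, -, hqnorm⟩ := exists_proj V hVfd (f (i + 1))
    have h2 : ⟪q, w⟫ = (0 : ℝ) := (Submodule.mem_orthogonal _ _).1 hwV _ hqK
    have hsplit : ⟪f (i + 1), w⟫ = ⟪f (i + 1) - q, w⟫ := by
      rw [inner_sub_left, h2, sub_zero]
    rw [hsplit]
    calc |⟪f (i + 1) - q, w⟫| ≤ ‖f (i + 1) - q‖ * ‖w‖ := abs_real_inner_le_norm _ _
      _ = ‖f (i + 1) - q‖ := by rw [hwnorm, mul_one]
      _ ≤ d := hqnorm ▸ hd _ (hmemF i)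
  have hexp : ∀ i, ⟪f (i + 1), w⟫ = ∑ j ∈ Finset.range (n + 1), β j * ⟪f (i + 1), h j⟫ := by
    intro i
    rw [hw, inner_sum, ← Fin.sum_univ_eq_sum_range (fun j => β j * ⟪f (i + 1), h j⟫) (n + 1)]
    refine Finset.sum_congr rfl fun j _ => ?_
    rw [real_inner_smul_right, hβval j]
  set t : ℕ → ℝ := fun j => σ j * |β j| with ht
  have hstep : ∀ i, i ≤ n → t i ≤ d + ∑ j ∈ Finset.range i, t j := by
    intro i hi
    have hsum : ∑ j ∈ Finset.range (n + 1), β j * ⟪f (i + 1), h j⟫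
        = (∑ j ∈ Finset.range i, β j * ⟪f (i + 1), h j⟫) + β i * σ i := by
      have hsub : ∑ j ∈ Finset.range (n + 1), β j * ⟪f (i + 1), h j⟫
          = ∑ j ∈ Finset.range (i + 1), β j * ⟪f (i + 1), h j⟫ := by
        refine (Finset.sum_subset (Finset.range_subset_range.mpr (by omega)) ?_).symm
        intro x hx hnx
        rw [Finset.mem_range] at hx hnx
        rw [hch (show i < x by omega), mul_zero]
      rw [hsub, Finset.sum_range_succ, hcd i hi]
    have hkey : β i * σ i = ⟪f (i + 1), w⟫ - ∑ j ∈ Finset.range i, β j * ⟪f (i + 1), h j⟫ := by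
      rw [hexp i, hsum]; ring
    have habs : t i = |β i * σ i| := by
      rw [ht, abs_mul, abs_of_nonneg (hσ0 i), mul_comm]
    rw [habs, hkey]
    calc |⟪f (i + 1), w⟫ - ∑ j ∈ Finset.range i, β j * ⟪f (i + 1), h j⟫|
        ≤ |⟪f (i + 1), w⟫| + |∑ j ∈ Finset.range i, β j * ⟪f (i + 1), h j⟫| := by
          simpa [sub_eq_add_neg, abs_neg] using
            abs_add_le (⟪f (i + 1), w⟫) (-(∑ j ∈ Finset.range i, β j * ⟪f (i + 1), h j⟫))
      _ ≤ d + ∑ j ∈ Finset.range i, t j := by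
          refine add_le_add (hfw i) ?_
          refine (Finset.abs_sum_le_sum_abs _ _).trans (Finset.sum_le_sum fun j hj => ?_)
          have hjn : j ≤ n := by
            have := Finset.mem_range.mp hj; omega
          rw [abs_mul, ht]
          calc |β j| * |⟪f (i + 1), h j⟫| ≤ |β j| * σ j :=
                mul_le_mul_of_nonneg_left (hcl i j hjn) (abs_nonneg _)
            _ = σ j * |β j| := mul_comm _ _
  have hgeom2 : ∀ m : ℕ, ∑ j ∈ Finset.range m, (2 : ℝ) ^ j = 2 ^ m - 1 := by
    intro m
    rw [geom_sum_eq (by norm_num : (2 : ℝ) ≠ 1)]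
    norm_num
  have htb : ∀ i, i ≤ n → t i ≤ 2 ^ i * d := by
    intro i
    induction i using Nat.strong_induction_on with
    | _ i ih =>
      intro hi
      calc t i ≤ d + ∑ j ∈ Finset.range i, t j := hstep i hi
        _ ≤ d + ∑ j ∈ Finset.range i, (2 : ℝ) ^ j * d := by
            refine add_le_add_right (Finset.sum_le_sum fun j hj => ?_) d
            have hji := Finset.mem_range.mp hj
            exact ih j hji (by omega)
        _ = d + (2 ^ i - 1) * d := by rw [← Finset.sum_mul, hgeom2]
        _ = 2 ^ i * d := by ring
  have hβsq : ∑ j ∈ Finset.range (n + 1), β j ^ 2 = 1 := by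
    rw [← Fin.sum_univ_eq_sum_range (fun j => β j ^ 2) (n + 1), ← hbsq]
    exact Finset.sum_congr rfl fun j _ => by rw [hβval j]
  have hq4 : ∀ m : ℕ, ((2 : ℝ) ^ m) ^ 2 = 4 ^ m := by
    intro m
    rw [← pow_mul, mul_comm m 2, pow_mul]
    norm_num
  have hsq : σ n ^ 2 ≤ (4 : ℝ) ^ (n + 1) / 3 * d ^ 2 := by
    have h1 : σ n ^ 2 = ∑ j ∈ Finset.range (n + 1), σ n ^ 2 * β j ^ 2 := by
      rw [← Finset.mul_sum, hβsq, mul_one]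
    rw [h1]
    have h2 : ∀ j ∈ Finset.range (n + 1), σ n ^ 2 * β j ^ 2 ≤ (4 : ℝ) ^ j * d ^ 2 := by
      intro j hj
      have hjn : j ≤ n := by have := Finset.mem_range.mp hj; omega
      have e1 : σ n ^ 2 * β j ^ 2 ≤ σ j ^ 2 * β j ^ 2 := by
        exact mul_le_mul_of_nonneg_right (pow_le_pow_left₀ (hσ0 n) (hσanti hjn) 2)
          (sq_nonneg (β j))
      have e2 : σ j ^ 2 * β j ^ 2 = t j ^ 2 := by
        rw [ht]; simp [mul_pow, sq_abs]
      have e3 : t j ^ 2 ≤ (2 ^ j * d) ^ 2 := by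
        have h4 := htb j hjn
        have h5 : 0 ≤ t j := mul_nonneg (hσ0 j) (abs_nonneg _)
        nlinarith
      have e4 : ((2 : ℝ) ^ j * d) ^ 2 = 4 ^ j * d ^ 2 := by rw [mul_pow, hq4]
      calc σ n ^ 2 * β j ^ 2 ≤ σ j ^ 2 * β j ^ 2 := e1
        _ = t j ^ 2 := e2
        _ ≤ (2 ^ j * d) ^ 2 := e3
        _ = 4 ^ j * d ^ 2 := e4
    calc ∑ j ∈ Finset.range (n + 1), σ n ^ 2 * β j ^ 2
        ≤ ∑ j ∈ Finset.range (n + 1), (4 : ℝ) ^ j * d ^ 2 := Finset.sum_le_sum h2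
      _ = (∑ j ∈ Finset.range (n + 1), (4 : ℝ) ^ j) * d ^ 2 := by rw [Finset.sum_mul]
      _ = ((4 ^ (n + 1) - 1) / 3) * d ^ 2 := by
          rw [geom_sum_eq (by norm_num : (4 : ℝ) ≠ 1)]; norm_num
      _ ≤ 4 ^ (n + 1) / 3 * d ^ 2 := by nlinarith [sq_nonneg d]
  have hsq2 : ((2 : ℝ) ^ (n + 1) / Real.sqrt 3 * d) ^ 2 = 4 ^ (n + 1) / 3 * d ^ 2 := by
    rw [mul_pow, div_pow, Real.sq_sqrt (by norm_num : (0 : ℝ) ≤ 3), hq4]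
  calc Metric.infDist (f (n + 1)) (Submodule.span ℝ (f '' Set.Icc 1 n) : Set H)
      = σ n := rfl
    _ = Real.sqrt (σ n ^ 2) := (Real.sqrt_sq (hσ0 n)).symm
    _ ≤ Real.sqrt (((2 : ℝ) ^ (n + 1) / Real.sqrt 3 * d) ^ 2) :=
        Real.sqrt_le_sqrt (by rw [hsq2]; exact hsq)
    _ = (2 : ℝ) ^ (n + 1) / Real.sqrt 3 * d := Real.sqrt_sq hRHS0

end Aux

/-- Direct comparison of the greedy quantities with the Kolmogorov widths:
`σ_I ≤ (2^{I+1}/√3) d_I`. -/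
theorem greedy_sigma_le_two_pow_width
    {H : Type*} [NormedAddCommGroup H] [InnerProductSpace ℝ H]
    (F : Set H) (hF : IsCompact F) (f : ℕ → H) (hf : IsGreedy F f) :
    ∀ I : ℕ, greedySigma F f I ≤ ((2 : ℝ) ^ (I + 1) / Real.sqrt 3) * kolWidth F I := by
  intro I
  set C : ℝ := (2 : ℝ) ^ (I + 1) / Real.sqrt 3 with hC
  have hCpos : 0 < C := by rw [hC]; positivity
  -- the index type for the width is nonempty
  haveI hNE : Nonempty {V : Submodule ℝ H // FiniteDimensional ℝ V ∧ Module.finrank ℝ V ≤ I} :=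
    ⟨⟨⊥, ⟨inferInstance, by simp⟩⟩⟩
  have hk0 : 0 ≤ kolWidth F I := by
    refine Real.le_iInf (fun V => ?_) le_rfl
    exact Real.iSup_nonneg fun x => Real.iSup_nonneg fun _ => Metric.infDist_nonneg
  -- a uniform bound over the compact set F
  obtain ⟨R, hR⟩ := (Metric.isBounded_iff_subset_closedBall 0).mp hF.isBounded
  have hbound : ∀ (V : Submodule ℝ H), ∀ y ∈ F, Metric.infDist y (V : Set H) ≤ R := by
    intro V y hy
    calc Metric.infDist y (V : Set H) ≤ dist y 0 := Metric.infDist_le_dist_of_mem V.zero_mem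
      _ ≤ R := by simpa [Metric.mem_closedBall] using hR hy
  -- the main bound for the distinguished element
  have main : Metric.infDist (f (I + 1)) (Submodule.span ℝ (f '' Set.Icc 1 I) : Set H)
      ≤ C * kolWidth F I := by
    by_contra hcon
    push_neg at hcon
    set ε : ℝ := (Metric.infDist (f (I + 1)) (Submodule.span ℝ (f '' Set.Icc 1 I) : Set H)
      - C * kolWidth F I) / 2 with hε
    have hεpos : 0 < ε := by rw [hε]; linarith
    have hlt : kolWidth F I < kolWidth F I + ε / C := lt_add_of_pos_right _ (by positivity)
    obtain ⟨V, hVlt⟩ := exists_lt_of_ciInf_lt (show (⨅ V : {V : Submodule ℝ H //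
        FiniteDimensional ℝ V ∧ Module.finrank ℝ V ≤ I},
        ⨆ x ∈ F, Metric.infDist x ((V : Submodule ℝ H) : Set H)) < kolWidth F I + ε / C from hlt)
    have hdV : ∀ x ∈ F, Metric.infDist x ((V : Submodule ℝ H) : Set H) ≤ kolWidth F I + ε / C :=
      fun x hx => le_trans (le_biSup_of_mem (hbound (V : Submodule ℝ H)) hx) (le_of_lt hVlt)
    have hcore := greedy_core F f hf I (V : Submodule ℝ H) V.2.1 V.2.2 hdV
    rw [← hC] at hcore
    have : C * (kolWidth F I + ε / C) = C * kolWidth F I + ε := by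
      rw [mul_add, mul_div_cancel₀ _ hCpos.ne']
    rw [this] at hcore
    rw [hε] at hcore
    linarith [hcon, hcore]
  -- conclude for the supremum
  have hRHS0 : 0 ≤ C * kolWidth F I := mul_nonneg hCpos.le hk0
  refine Real.iSup_le (fun x => Real.iSup_le (fun hx => ?_) hRHS0) hRHS0
  exact le_trans ((hf I).2 x hx) main
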